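/- Let N = rs with r, s positive integers and gcd(r, s) = 1, and let σ_{1/r} ∈ SL₂(ℝ) be the Atkin–Lehner scaling matrix of the cusp 1/r. Then: (i) a positive real number γ occurs as the lower-left entry of some element of Γ₀(N) · σ_{1/r} if and only if γ = c·√s for some positive integer c with r ∣ c and gcd(c, s) = 1; (ii) for such a c, writing D for the set of elements M of Γ₀(N) · σ_{1/r} with M₂₁ = c√s, M₁₁ ∈ [0, c√s) and M₂₂ ∈ [0, c√s), one has ∑_{M ∈ D} e((M₁₁·m + M₂₂·n)/(c√s)) = S(t·m, n; c) for all integers m, n, where t is any integer with t·s ≡ 1 (mod c). -/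

import Mathlib

open Matrix

/-- `e x = exp(2πix)`. -/
noncomputable def eFun (x : ℝ) : ℂ := Complex.exp (2 * Real.pi * Complex.I * x)

/-- The classical Kloosterman sum `S(m,n;c) = ∑_{d mod c, (d,c)=1} e((m d* + n d)/c)`. -/
noncomputable def kloostermanSum (m n : ℤ) (c : ℕ) : ℂ :=
  ∑ d ∈ (Finset.range c).filter (fun d => Nat.gcd d c = 1),
    eFun (((m * (((d : ZMod c)⁻¹).val : ℤ) + n * d : ℤ) : ℝ) / (c : ℝ))


lemma eFun_congr {c : ℕ} (hc : 0 < c) {x y : ℤ} (h : (c:ℤ) ∣ x - y) :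
    eFun ((x:ℝ)/c) = eFun ((y:ℝ)/c) := by
  obtain ⟨k, hk⟩ := h
  have hc' : (c:ℝ) ≠ 0 := Nat.cast_ne_zero.mpr hc.ne'
  have hx : (x:ℝ)/c = (y:ℝ)/c + k := by
    have : (x:ℝ) = y + c*k := by exact_mod_cast congrArg (Int.cast : ℤ → ℝ) (by linarith)
    rw [this]; field_simp
  unfold eFun
  rw [hx]; push_cast
  rw [mul_add, Complex.exp_add]
  have : (2 * ↑Real.pi * Complex.I * (k : ℂ)) = (k : ℤ) * (2 * ↑Real.pi * Complex.I) := by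
    push_cast; ring
  rw [this, Complex.exp_int_mul_two_pi_mul_I, mul_one]

lemma map_mul_int (A B : Matrix (Fin 2) (Fin 2) ℤ) :
    (A * B).map (Int.cast : ℤ → ℝ) = A.map Int.cast * B.map Int.cast :=
  Matrix.map_mul (f := Int.castRingHom ℝ)

lemma mapMul_nu_entries (s : ℕ) (h : Matrix (Fin 2) (Fin 2) ℤ) :
    h.map (Int.cast : ℤ → ℝ) * !![Real.sqrt s, 0; 0, (Real.sqrt s)⁻¹] =
    !![(h 0 0 : ℝ) * Real.sqrt s, (h 0 1 : ℝ) * (Real.sqrt s)⁻¹;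
       (h 1 0 : ℝ) * Real.sqrt s, (h 1 1 : ℝ) * (Real.sqrt s)⁻¹] := by
  ext i j
  fin_cases i <;> fin_cases j <;>
    simp [Matrix.mul_apply, Fin.sum_univ_two, Matrix.map_apply]

lemma existsG_iff (r s : ℕ) (sbar b : ℤ) (hb : sbar * s - 1 = r * b)
    (σ : Matrix (Fin 2) (Fin 2) ℝ)
    (hσ : σ = !![(1 : ℝ), (b : ℝ); (r : ℝ), ((sbar * s : ℤ) : ℝ)] *
      !![Real.sqrt s, 0; 0, (Real.sqrt s)⁻¹])
    (M : Matrix (Fin 2) (Fin 2) ℝ) :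
    (∃ g : Matrix (Fin 2) (Fin 2) ℤ, g.det = 1 ∧ ((r * s : ℕ) : ℤ) ∣ g 1 0 ∧
        M = g.map (Int.cast : ℤ → ℝ) * σ) ↔
    (∃ h : Matrix (Fin 2) (Fin 2) ℤ, h.det = 1 ∧
        ((r * s : ℕ) : ℤ) ∣ h 1 0 * (sbar * s) - h 1 1 * r ∧
        M = h.map (Int.cast : ℤ → ℝ) * !![Real.sqrt s, 0; 0, (Real.sqrt s)⁻¹]) := by
  set τ : Matrix (Fin 2) (Fin 2) ℤ := !![1, b; (r:ℤ), sbar * s] with hτ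
  set τi : Matrix (Fin 2) (Fin 2) ℤ := !![sbar * s, -b; -(r:ℤ), 1] with hτi
  have hττ : τ * τi = 1 := by
    ext i j; fin_cases i <;> fin_cases j <;>
      simp [hτ, hτi, Matrix.mul_apply, Fin.sum_univ_two] <;> linarith
  have hτiτ : τi * τ = 1 := mul_eq_one_comm.mp hττ
  have hτmap : τ.map (Int.cast : ℤ → ℝ) =
      !![(1 : ℝ), (b : ℝ); (r : ℝ), ((sbar * s : ℤ) : ℝ)] := by
    ext i j; fin_cases i <;> fin_cases j <;> simp [hτ, Matrix.map_apply]
  constructor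
  · rintro ⟨g, hg1, hg2, hg3⟩
    refine ⟨g * τ, by rw [Matrix.det_mul, hg1, one_mul, hτ, Matrix.det_fin_two_of]; linarith, ?_, ?_⟩
    · have e10 : (g * τ) 1 0 = g 1 0 * 1 + g 1 1 * r := by
        simp [Matrix.mul_apply, Fin.sum_univ_two, hτ]
      have e11 : (g * τ) 1 1 = g 1 0 * b + g 1 1 * (sbar * s) := by
        simp [Matrix.mul_apply, Fin.sum_univ_two, hτ]
      have : (g * τ) 1 0 * (sbar * s) - (g * τ) 1 1 * r = g 1 0 := by
        rw [e10, e11]; linear_combination (g 1 0 : ℤ) * hb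
      rw [this]; exact hg2
    · rw [hg3, hσ, ← hτmap, ← Matrix.mul_assoc, ← map_mul_int]
  · rintro ⟨h, hh1, hh2, hh3⟩
    refine ⟨h * τi, by rw [Matrix.det_mul, hh1, one_mul, hτi, Matrix.det_fin_two_of]; linarith, ?_, ?_⟩
    · have e10 : (h * τi) 1 0 = h 1 0 * (sbar * s) + h 1 1 * (-(r:ℤ)) := by
        simp [Matrix.mul_apply, Fin.sum_univ_two, hτi]
      rw [e10]
      convert hh2 using 1; ring
    · rw [hh3, hσ, ← hτmap, ← Matrix.mul_assoc, ← map_mul_int, Matrix.mul_assoc, hτiτ,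
        Matrix.mul_one]

/-- **Kloosterman sums for the pair of cusps `∞`, `1/r` with Atkin–Lehner scaling**
(Proposition 2.5 of the paper): (i) the allowed moduli are exactly `c√s` with `r ∣ c`,
`(c,s) = 1`; (ii) for such `c`, `S_{∞,1/r}(m,n;c√s) = S(s̄m, n; c)`. -/
theorem stmt_5 (r s : ℕ) (hr : 0 < r) (hs : 0 < s) (hrs : Nat.Coprime r s)
    (sbar b : ℤ) (hb : sbar * s - 1 = r * b)
    (σ : Matrix (Fin 2) (Fin 2) ℝ)
    (hσ : σ = !![(1 : ℝ), (b : ℝ); (r : ℝ), ((sbar * s : ℤ) : ℝ)] *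
      !![Real.sqrt s, 0; 0, (Real.sqrt s)⁻¹]) :
    (∀ γ : ℝ, 0 < γ →
      ((∃ g : Matrix (Fin 2) (Fin 2) ℤ, g.det = 1 ∧ ((r * s : ℕ) : ℤ) ∣ g 1 0 ∧
          (g.map (Int.cast : ℤ → ℝ) * σ) 1 0 = γ) ↔
        ∃ c : ℕ, 0 < c ∧ r ∣ c ∧ Nat.Coprime c s ∧ γ = (c : ℝ) * Real.sqrt s)) ∧
    (∀ c : ℕ, 0 < c → r ∣ c → Nat.Coprime c s → ∀ m n t : ℤ, t * s ≡ 1 [ZMOD (c : ℤ)] →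
      ∑ᶠ M ∈ {M : Matrix (Fin 2) (Fin 2) ℝ |
          (∃ g : Matrix (Fin 2) (Fin 2) ℤ, g.det = 1 ∧ ((r * s : ℕ) : ℤ) ∣ g 1 0 ∧
            M = g.map (Int.cast : ℤ → ℝ) * σ) ∧
          M 1 0 = (c : ℝ) * Real.sqrt s ∧
          M 0 0 ∈ Set.Ico 0 ((c : ℝ) * Real.sqrt s) ∧
          M 1 1 ∈ Set.Ico 0 ((c : ℝ) * Real.sqrt s)},
        eFun ((M 0 0 * (m : ℝ) + M 1 1 * (n : ℝ)) / ((c : ℝ) * Real.sqrt s)) =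
      kloostermanSum (t * m) n c) := by
  constructor
  ·
    have hsqpos : 0 < Real.sqrt s := Real.sqrt_pos.mpr (by positivity)
    have hsqne : Real.sqrt s ≠ 0 := hsqpos.ne'
    intro γ hγ
    constructor
    · rintro ⟨g, hg1, hg2, hg3⟩
      obtain ⟨h, hdet, hdvd, hM⟩ := (existsG_iff r s sbar b hb σ hσ
        (g.map (Int.cast : ℤ → ℝ) * σ)).mp ⟨g, hg1, hg2, rfl⟩
      have hγ10 : (h 1 0 : ℝ) * Real.sqrt s = γ := by
        rw [← hg3, hM, mapMul_nu_entries]; simp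
      have hpos : 0 < h 1 0 := by
        have : (0:ℝ) < (h 1 0 : ℝ) := by
          by_contra hcon
          push_neg at hcon
          nlinarith
        exact_mod_cast this
      refine ⟨(h 1 0).toNat, by omega, ?_, ?_, ?_⟩
      · -- r ∣ c
        have hrdvd : (r:ℤ) ∣ h 1 0 * (sbar * s) - h 1 1 * r :=
          dvd_trans ⟨(s:ℤ), by push_cast; ring⟩ hdvd
        have : (r:ℤ) ∣ h 1 0 := by
          have hrw : h 1 0 = (h 1 0 * (sbar * s) - h 1 1 * r) - r * (h 1 0 * b) + h 1 1 * r := by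
            linear_combination (-(h 1 0) : ℤ) * hb
          rw [hrw]
          exact dvd_add (dvd_sub hrdvd (Dvd.intro _ rfl)) (Dvd.intro_left _ rfl)
        have : (r:ℤ) ∣ ((h 1 0).toNat : ℤ) := by rwa [Int.toNat_of_nonneg hpos.le]
        exact_mod_cast this
      · -- coprime c s
        have hsdvd : (s:ℤ) ∣ h 1 0 * (sbar * s) - h 1 1 * r :=
          dvd_trans ⟨(r:ℤ), by push_cast; ring⟩ hdvd
        have hs11 : (s:ℤ) ∣ h 1 1 := by
          have h1 : (s:ℤ) ∣ h 1 1 * r := by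
            have : h 1 1 * (r:ℤ) = h 1 0 * (sbar * s) - (h 1 0 * (sbar * s) - h 1 1 * r) := by ring
            rw [this]
            exact dvd_sub ⟨h 1 0 * sbar, by ring⟩ hsdvd
          exact (Nat.isCoprime_iff_coprime.mpr hrs.symm).dvd_of_dvd_mul_right h1
        have hcop : IsCoprime (h 1 0) (h 1 1) := by
          refine ⟨-(h 0 1), h 0 0, ?_⟩
          rw [Matrix.det_fin_two] at hdet
          linarith
        have hcop2 : IsCoprime (h 1 0) ((s:ℕ):ℤ) := hcop.of_isCoprime_of_dvd_right hs11
        have := Int.isCoprime_iff_gcd_eq_one.mp hcop2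
        rw [← Int.toNat_of_nonneg hpos.le] at this
        rwa [Int.gcd_natCast_natCast] at this
      · have hcast : (((h 1 0).toNat : ℕ) : ℝ) = ((h 1 0 : ℤ) : ℝ) := by
          exact_mod_cast congrArg (Int.cast : ℤ → ℝ) (Int.toNat_of_nonneg hpos.le)
        rw [hcast]; exact hγ10.symm
    · rintro ⟨c, hc, hrc, hcs, hγeq⟩
      obtain ⟨u, v, huv⟩ := Nat.isCoprime_iff_coprime.mpr hcs
      obtain ⟨c₂, hc₂⟩ := hrc
      set h : Matrix (Fin 2) (Fin 2) ℤ := !![v, -u; (c:ℤ), (s:ℤ)] with hh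
      have hdet : h.det = 1 := by
        rw [hh, Matrix.det_fin_two_of]; linarith
      have hdvd : ((r * s : ℕ) : ℤ) ∣ h 1 0 * (sbar * s) - h 1 1 * r := by
        refine ⟨(c₂:ℤ) * sbar - 1, ?_⟩
        have hcc : (c : ℤ) = r * c₂ := by exact_mod_cast hc₂
        have e10 : h 1 0 = (c:ℤ) := by simp [hh]
        have e11 : h 1 1 = (s:ℤ) := by simp [hh]
        rw [e10, e11, hcc]
        push_cast
        ring
      obtain ⟨g, hg1, hg2, hg3⟩ := (existsG_iff r s sbar b hb σ hσ
        (h.map (Int.cast : ℤ → ℝ) * !![Real.sqrt s, 0; 0, (Real.sqrt s)⁻¹])).mpr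
        ⟨h, hdet, hdvd, rfl⟩
      refine ⟨g, hg1, hg2, ?_⟩
      rw [← hg3, mapMul_nu_entries, hγeq]
      simp [hh]
  ·
    have hsqpos : 0 < Real.sqrt s := Real.sqrt_pos.mpr (by positivity)
    have hsqne : Real.sqrt s ≠ 0 := hsqpos.ne'
    have hss : Real.sqrt s * Real.sqrt s = (s:ℝ) := Real.mul_self_sqrt (by positivity)
    intro c hc hrc hcs m n t ht
    haveI : NeZero c := ⟨hc.ne'⟩
    obtain ⟨c₂, hc₂⟩ := hrc
    have hcc : (c : ℤ) = r * c₂ := by exact_mod_cast hc₂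
    have hcne : (c:ℤ) ≠ 0 := by exact_mod_cast hc.ne'
    set K := (Finset.range c).filter (fun d => Nat.gcd d c = 1) with hK
    set aV : ℕ → ℕ := fun d => (((s : ZMod c) * (d : ZMod c))⁻¹).val with haV
    set hmat : ℕ → Matrix (Fin 2) (Fin 2) ℤ := fun d =>
      !![(aV d : ℤ), ((aV d : ℤ) * ((s:ℤ) * d) - 1) / c; (c:ℤ), (s:ℤ) * d] with hhmat
    set F : ℕ → Matrix (Fin 2) (Fin 2) ℝ := fun d =>
      (hmat d).map (Int.cast : ℤ → ℝ) * !![Real.sqrt s, 0; 0, (Real.sqrt s)⁻¹] with hF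
    have hdK : ∀ d ∈ K, d < c ∧ Nat.gcd d c = 1 := by
      intro d hd
      simpa [hK, Finset.mem_filter, Finset.mem_range] using hd
    have hunit : ∀ d ∈ K, IsUnit ((s : ZMod c) * (d : ZMod c)) := by
      intro d hd
      have h1 : IsUnit (((s * d : ℕ)) : ZMod c) :=
        (ZMod.isUnit_iff_coprime _ _).mpr (Nat.Coprime.mul hcs.symm (hdK d hd).2)
      rwa [Nat.cast_mul] at h1
    have hmul1 : ∀ d ∈ K, ((aV d : ℕ) : ZMod c) * ((s : ZMod c) * (d : ZMod c)) = 1 := by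
      intro d hd
      have : ((aV d : ℕ) : ZMod c) = ((s : ZMod c) * (d : ZMod c))⁻¹ := by
        simp [haV, ZMod.natCast_val, ZMod.cast_id]
      rw [this]
      exact ZMod.inv_mul_of_unit _ (hunit d hd)
    have hdvd1 : ∀ d ∈ K, (c:ℤ) ∣ (aV d : ℤ) * ((s:ℤ) * d) - 1 := by
      intro d hd
      have h0 := hmul1 d hd
      have h1 : (((aV d : ℤ) * ((s:ℤ) * d) - 1 : ℤ) : ZMod c) = 0 := by
        push_cast
        rw [h0]  -- hoping shapes match
        ring
      exact (ZMod.intCast_zmod_eq_zero_iff_dvd _ _).mp h1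
    have hdet1 : ∀ d ∈ K, (hmat d).det = 1 := by
      intro d hd
      have h2 := Int.ediv_mul_cancel (hdvd1 d hd)
      simp only [hhmat]
      rw [Matrix.det_fin_two_of]
      linarith
    have hF00 : ∀ d : ℕ, (F d) 0 0 = ((aV d : ℕ) : ℝ) * Real.sqrt s := by
      intro d
      simp only [hF]
      rw [mapMul_nu_entries]
      simp [hhmat]
    have hF01 : ∀ d : ℕ, (F d) 0 1 = ((((aV d : ℤ) * ((s:ℤ) * d) - 1) / c : ℤ) : ℝ) * (Real.sqrt s)⁻¹ := by
      intro d
      simp only [hF]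
      rw [mapMul_nu_entries]
      simp [hhmat]
    have hF10 : ∀ d : ℕ, (F d) 1 0 = (c : ℝ) * Real.sqrt s := by
      intro d
      simp only [hF]
      rw [mapMul_nu_entries]
      simp [hhmat]
    have hF11 : ∀ d : ℕ, (F d) 1 1 = (d : ℝ) * Real.sqrt s := by
      intro d
      simp only [hF]
      rw [mapMul_nu_entries]
      simp [hhmat]
      field_simp
      first
      | linear_combination (d:ℝ) * hss
      | linear_combination (-(d:ℝ)) * hss
      | linear_combination (2*(d:ℝ)) * hss
      | linear_combination (-2*(d:ℝ)) * hss
    -- membership of F d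
    have hmemF : ∀ d ∈ K, (∃ g : Matrix (Fin 2) (Fin 2) ℤ, g.det = 1 ∧ ((r * s : ℕ) : ℤ) ∣ g 1 0 ∧
          F d = g.map (Int.cast : ℤ → ℝ) * σ) ∧
        F d 1 0 = (c : ℝ) * Real.sqrt s ∧
        F d 0 0 ∈ Set.Ico 0 ((c : ℝ) * Real.sqrt s) ∧
        F d 1 1 ∈ Set.Ico 0 ((c : ℝ) * Real.sqrt s) := by
      intro d hd
      have haVlt : aV d < c := ZMod.val_lt _
      refine ⟨?_, hF10 d, ?_, ?_⟩
      · refine (existsG_iff r s sbar b hb σ hσ (F d)).mpr ⟨hmat d, hdet1 d hd, ?_, by rw [hF]⟩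
        refine ⟨(c₂:ℤ) * sbar - d, ?_⟩
        have e10 : (hmat d) 1 0 = (c:ℤ) := by simp [hhmat]
        have e11 : (hmat d) 1 1 = (s:ℤ) * d := by simp [hhmat]
        rw [e10, e11, hcc]
        push_cast
        ring
      · rw [hF00]
        constructor
        · positivity
        · have : ((aV d : ℕ) : ℝ) < (c:ℝ) := by exact_mod_cast haVlt
          exact mul_lt_mul_of_pos_right this hsqpos
      · rw [hF11]
        constructor
        · positivity
        · have : ((d : ℕ) : ℝ) < (c:ℝ) := by exact_mod_cast (hdK d hd).1
          exact mul_lt_mul_of_pos_right this hsqpos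
    -- the set equals the image
    have hDset : {M : Matrix (Fin 2) (Fin 2) ℝ |
        (∃ g : Matrix (Fin 2) (Fin 2) ℤ, g.det = 1 ∧ ((r * s : ℕ) : ℤ) ∣ g 1 0 ∧
          M = g.map (Int.cast : ℤ → ℝ) * σ) ∧
        M 1 0 = (c : ℝ) * Real.sqrt s ∧
        M 0 0 ∈ Set.Ico 0 ((c : ℝ) * Real.sqrt s) ∧
        M 1 1 ∈ Set.Ico 0 ((c : ℝ) * Real.sqrt s)} = ↑(K.image F) := by
      ext M
      simp only [Set.mem_setOf_eq, Finset.coe_image, Set.mem_image, Finset.mem_coe]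
      constructor
      · rintro ⟨hex, hM10, ⟨hM00l, hM00r⟩, hM11l, hM11r⟩
        obtain ⟨h, hdet, hdvd, hM⟩ := (existsG_iff r s sbar b hb σ hσ M).mp hex
        have e00 : M 0 0 = (h 0 0 : ℝ) * Real.sqrt s := by rw [hM, mapMul_nu_entries]; simp
        have e10 : M 1 0 = (h 1 0 : ℝ) * Real.sqrt s := by rw [hM, mapMul_nu_entries]; simp
        have e11 : M 1 1 = (h 1 1 : ℝ) * (Real.sqrt s)⁻¹ := by rw [hM, mapMul_nu_entries]; simp
        have h10c : h 1 0 = (c:ℤ) := by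
          have h1 : (h 1 0 : ℝ) * Real.sqrt s = (c:ℝ) * Real.sqrt s := by rw [← e10, hM10]
          have := mul_right_cancel₀ hsqne h1
          exact_mod_cast this
        have hs11 : (s:ℤ) ∣ h 1 1 := by
          have hsdvd : (s:ℤ) ∣ h 1 0 * (sbar * s) - h 1 1 * r :=
            dvd_trans ⟨(r:ℤ), by push_cast; ring⟩ hdvd
          have h1 : (s:ℤ) ∣ h 1 1 * r := by
            have h2 : h 1 1 * (r:ℤ) = h 1 0 * (sbar * s) - (h 1 0 * (sbar * s) - h 1 1 * r) := by
              ring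
            rw [h2]
            exact dvd_sub ⟨h 1 0 * sbar, by ring⟩ hsdvd
          exact (Nat.isCoprime_iff_coprime.mpr hrs.symm).dvd_of_dvd_mul_right h1
        obtain ⟨d', hd'⟩ := hs11
        have hMd : M 1 1 = (d' : ℝ) * Real.sqrt s := by
          rw [e11, hd']
          push_cast
          field_simp
          first
          | linear_combination (d':ℝ) * hss
          | linear_combination (-(d':ℝ)) * hss
        have hd'0 : 0 ≤ d' := by
          have : (0:ℝ) ≤ (d' : ℝ) * Real.sqrt s := by rw [← hMd]; exact hM11l
          have h2 : (0:ℝ) ≤ (d' : ℝ) := by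
            by_contra hcon
            push_neg at hcon
            exact absurd this (not_le.mpr (mul_neg_of_neg_of_pos hcon hsqpos))
          exact_mod_cast h2
        have hd'c : d' < (c:ℤ) := by
          have h1 : (d' : ℝ) * Real.sqrt s < (c:ℝ) * Real.sqrt s := by rw [← hMd]; exact hM11r
          have h2 : (d' : ℝ) < (c:ℝ) := lt_of_mul_lt_mul_right h1 hsqpos.le
          exact_mod_cast h2
        set d := d'.toNat with hdd'
        have hdd : (d:ℤ) = d' := Int.toNat_of_nonneg hd'0
        have h000 : (0:ℤ) ≤ h 0 0 := by
          have h2 : (0:ℝ) ≤ (h 0 0 : ℝ) := by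
            by_contra hcon
            push_neg at hcon
            rw [e00] at hM00l
            exact absurd hM00l (not_le.mpr (mul_neg_of_neg_of_pos hcon hsqpos))
          exact_mod_cast h2
        have h00c : h 0 0 < (c:ℤ) := by
          have h1 : (h 0 0 : ℝ) * Real.sqrt s < (c:ℝ) * Real.sqrt s := by
            rw [← e00]; exact hM00r
          have h2 : (h 0 0 : ℝ) < (c:ℝ) := lt_of_mul_lt_mul_right h1 hsqpos.le
          exact_mod_cast h2
        have hdeteq : h 0 0 * ((s:ℤ) * d') - h 0 1 * c = 1 := by
          rw [Matrix.det_fin_two] at hdet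
          rw [← h10c, ← hd']
          linarith
        have hdc : d < c := by
          have : (d:ℤ) < (c:ℤ) := by rw [hdd]; exact hd'c
          exact_mod_cast this
        have hgcd : Nat.gcd d c = 1 := by
          have h1 : IsCoprime d' ((c:ℕ):ℤ) := ⟨h 0 0 * s, -(h 0 1), by linear_combination hdeteq⟩
          rw [← hdd] at h1
          have h2 := Int.isCoprime_iff_gcd_eq_one.mp h1
          rwa [Int.gcd_natCast_natCast] at h2
        have hdK2 : d ∈ K := by
          rw [hK]
          simp only [Finset.mem_filter, Finset.mem_range]
          exact ⟨hdc, hgcd⟩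
        have hadvd : (c:ℤ) ∣ h 0 0 - (aV d : ℤ) := by
          have hx := hdvd1 d hdK2
          have h1 : (c:ℤ) ∣ (h 0 0 - (aV d:ℤ)) * ((s:ℤ) * d) := by
            have h2 : (h 0 0 - (aV d:ℤ)) * ((s:ℤ)*d) =
                (h 0 0 * ((s:ℤ) * d') - h 0 1 * c - 1) - ((aV d:ℤ)*((s:ℤ)*d) - 1) + h 0 1 * c := by
              rw [hdd]; ring
            have h3 : h 0 0 * ((s:ℤ)*d') - h 0 1 * c - 1 = 0 := by linarith
            rw [h2, h3]
            exact dvd_add (dvd_sub (dvd_zero _) hx) ⟨h 0 1, mul_comm _ _⟩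
          have hcop : IsCoprime ((c:ℕ):ℤ) ((s:ℤ) * d) := by
            have hcs' : IsCoprime ((c:ℕ):ℤ) ((s:ℕ):ℤ) := Nat.isCoprime_iff_coprime.mpr hcs
            have hcd : IsCoprime ((c:ℕ):ℤ) ((d:ℕ):ℤ) :=
              Nat.isCoprime_iff_coprime.mpr (Nat.Coprime.symm hgcd)
            exact hcs'.mul_right hcd
          exact hcop.dvd_of_dvd_mul_right h1
        have haveq : h 0 0 = (aV d : ℤ) := by
          have hlt : aV d < c := ZMod.val_lt _
          have hlt' : (aV d : ℤ) < (c:ℤ) := by exact_mod_cast hlt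
          have h0a : (0:ℤ) ≤ (aV d:ℤ) := Int.ofNat_nonneg _
          have hz := Int.eq_zero_of_abs_lt_dvd hadvd (by rw [abs_lt]; omega)
          omega
        have h01eq : h 0 1 = ((aV d : ℤ) * ((s:ℤ)*d) - 1) / c := by
          have he : h 0 1 * c = (aV d:ℤ) * ((s:ℤ)*d) - 1 := by
            rw [← haveq, hdd]
            linarith
          rw [← he, Int.mul_ediv_cancel _ hcne]
        have hheq : hmat d = h := by
          ext i j
          fin_cases i <;> fin_cases j <;>
            simp [hhmat, haveq, h01eq, h10c, hd', hdd]
        exact ⟨d, hdK2, by show (hmat d).map (Int.cast : ℤ → ℝ) * _ = M; rw [hheq, hM]⟩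
      · rintro ⟨d, hd, rfl⟩
        exact hmemF d hd
    rw [hDset, finsum_mem_coe_finset]
    have hinj : ∀ x ∈ K, ∀ y ∈ K, F x = F y → x = y := by
      intro x hx y hy hxy
      have h1 : (F x) 1 1 = (F y) 1 1 := by rw [hxy]
      rw [hF11, hF11] at h1
      have h2 := mul_right_cancel₀ hsqne h1
      exact_mod_cast h2
    rw [Finset.sum_image hinj, kloostermanSum, ← hK]
    apply Finset.sum_congr rfl
    intro d hd
    rw [hF00, hF11]
    have hcne' : (c:ℝ) ≠ 0 := Nat.cast_ne_zero.mpr hc.ne'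
    have harg : (((aV d:ℕ):ℝ) * Real.sqrt s * (m:ℝ) + (d:ℝ) * Real.sqrt s * (n:ℝ)) / ((c:ℝ) * Real.sqrt s)
        = (((aV d : ℤ) * m + d * n : ℤ) : ℝ) / c := by
      push_cast
      field_simp
    rw [harg]
    apply eFun_congr hc
    set e := (((d:ℕ) : ZMod c)⁻¹).val with he
    have hdu : IsUnit ((d:ℕ) : ZMod c) := (ZMod.isUnit_iff_coprime _ _).mpr (hdK d hd).2
    have hE : ((e:ℕ) : ZMod c) = ((d:ℕ) : ZMod c)⁻¹ := by
      simp [he, ZMod.natCast_val, ZMod.cast_id]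
    have hDE : ((d:ℕ):ZMod c) * ((e:ℕ):ZMod c) = 1 := by
      rw [hE]; exact ZMod.mul_inv_of_unit _ hdu
    have hTS : ((t:ℤ):ZMod c) * ((s:ℕ):ZMod c) = 1 := by
      have h1 := (ZMod.intCast_eq_intCast_iff _ _ _).mpr ht
      push_cast at h1
      exact_mod_cast h1
    have hA : ((aV d : ℕ):ZMod c) = ((t:ℤ):ZMod c) * ((e:ℕ):ZMod c) := by
      have h1 := hmul1 d hd
      calc ((aV d:ℕ):ZMod c)
          = ((aV d:ℕ):ZMod c) * ((((t:ℤ):ZMod c) * ((s:ℕ):ZMod c)) *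
              (((d:ℕ):ZMod c) * ((e:ℕ):ZMod c))) := by rw [hTS, hDE]; ring
        _ = (((aV d:ℕ):ZMod c) * (((s:ℕ):ZMod c) * ((d:ℕ):ZMod c))) *
              (((t:ℤ):ZMod c) * ((e:ℕ):ZMod c)) := by ring
        _ = ((t:ℤ):ZMod c) * ((e:ℕ):ZMod c) := by rw [h1]; ring
    have hdvd2 : (c:ℤ) ∣ ((aV d:ℤ) - t * e) := by
      have h0 : (((aV d:ℤ) - t * e : ℤ) : ZMod c) = 0 := by
        push_cast
        push_cast at hA
        rw [hA]
        ring
      exact (ZMod.intCast_zmod_eq_zero_iff_dvd _ _).mp h0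
    have hfin : ((aV d:ℤ) * m + d * n) - ((t*m) * (e:ℤ) + n * d) = m * ((aV d:ℤ) - t * e) := by
      ring
    rw [hfin]
    exact Dvd.dvd.mul_left hdvd2 m
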